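/- For μ ∈ ℝ, σ > 0, c > 0, let g(μ, σ, c) denote the unique real solution of (μ − g)·Φ((μ − g)/σ) + σ·φ((μ − g)/σ) = c (the Gittins index of a Gaussian Pandora's box with mean μ, standard deviation σ, and opening cost c). Then g is differentiable on ℝ × (0, ∞) × (0, ∞), and writing z = (μ − g)/σ, its partial derivatives are ∂g/∂μ = 1, ∂g/∂σ = φ(z)/Φ(z), and ∂g/∂c = −1/Φ(z). Consequently, if μ, σ, c are differentiable functions of a parameter x with σ(x) > 0 and c(x) > 0, the Gittins index G(x) = g(μ(x), σ(x), c(x)) satisfies ∇G = ∇μ + (φ(z)·∇σ − ∇c)/Φ(z). -/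

import Mathlib

open MeasureTheory

/-- The standard normal probability density function `φ`. -/
noncomputable def stdGaussianPDF (z : ℝ) : ℝ :=
  (Real.sqrt (2 * Real.pi))⁻¹ * Real.exp (-(z ^ 2) / 2)

/-- The standard normal cumulative distribution function `Φ`. -/
noncomputable def stdGaussianCDF (z : ℝ) : ℝ :=
  ∫ u in Set.Iic z, stdGaussianPDF u

lemma pdf_pos (z : ℝ) : 0 < stdGaussianPDF z := by
  unfold stdGaussianPDF
  positivity

lemma pdf_strict (z : ℝ) : HasStrictDerivAt stdGaussianPDF (-z * stdGaussianPDF z) z := by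
  unfold stdGaussianPDF
  have h : HasStrictDerivAt (fun z : ℝ => -(z ^ 2) / 2) (-z) z := by
    have := ((hasStrictDerivAt_pow 2 z).neg).div_const 2
    simpa using this.congr_deriv (by ring)
  have := ((h.exp)).const_mul (Real.sqrt (2 * Real.pi))⁻¹
  refine this.congr_deriv ?_
  ring

lemma pdf_integrable : Integrable stdGaussianPDF := by
  unfold stdGaussianPDF
  have : Integrable (fun z : ℝ => Real.exp (-(1/2 : ℝ) * z ^ 2)) :=
    integrable_exp_neg_mul_sq (by norm_num)
  exact ((this.const_mul ((Real.sqrt (2*Real.pi))⁻¹)).congr (by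
    filter_upwards with z
    congr 1
    ring))

lemma pdf_cont : Continuous stdGaussianPDF := by
  unfold stdGaussianPDF; continuity

lemma cdf_pos (z : ℝ) : 0 < stdGaussianCDF z := by
  unfold stdGaussianCDF
  apply setIntegral_pos_iff_support_of_nonneg_ae (by
    filter_upwards with u using (pdf_pos u).le) (pdf_integrable.integrableOn) |>.2
  have : Function.support stdGaussianPDF = Set.univ := by
    ext u; simp [Function.support, (pdf_pos u).ne']
  rw [this, Set.univ_inter]
  simp [Real.volume_Iic]

lemma cdf_eq (z : ℝ) :
    stdGaussianCDF z = stdGaussianCDF 0 + ∫ u in (0:ℝ)..z, stdGaussianPDF u := by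
  have := intervalIntegral.integral_Iic_sub_Iic (f := stdGaussianPDF) (a := (0:ℝ)) (b := z)
    pdf_integrable.integrableOn pdf_integrable.integrableOn
  unfold stdGaussianCDF
  linarith [this]

lemma cdf_strict (z : ℝ) : HasStrictDerivAt stdGaussianCDF (stdGaussianPDF z) z := by
  have h : HasStrictDerivAt (fun z : ℝ => stdGaussianCDF 0 + ∫ u in (0:ℝ)..z, stdGaussianPDF u)
      (stdGaussianPDF z) z := by
    apply HasStrictDerivAt.const_add
    exact intervalIntegral.integral_hasStrictDerivAt_right
      (pdf_integrable.intervalIntegrable)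
      (pdf_cont.stronglyMeasurable.stronglyMeasurableAtFilter)
      pdf_cont.continuousAt
  exact h.congr_of_eventuallyEq (by filter_upwards with u using (cdf_eq u).symm)

/-- The auxiliary function `h z = z Φ(z) + φ(z)`. -/
noncomputable def hFun (z : ℝ) : ℝ := z * stdGaussianCDF z + stdGaussianPDF z

lemma hFun_strict (z : ℝ) : HasStrictDerivAt hFun (stdGaussianCDF z) z := by
  have := ((hasStrictDerivAt_id z).mul (cdf_strict z)).add (pdf_strict z)
  refine HasStrictDerivAt.congr_deriv (f := hFun) this ?_
  simp only [id]; ring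

lemma hFun_injective : Function.Injective hFun := by
  have : StrictMono hFun := by
    apply strictMono_of_deriv_pos
    intro z
    rw [(hFun_strict z).hasDerivAt.deriv]
    exact cdf_pos z
  exact this.injective

lemma hFun_key (g : ℝ → ℝ → ℝ → ℝ)
    (hg : ∀ m σ c : ℝ, 0 < σ → 0 < c →
      (m - g m σ c) * stdGaussianCDF ((m - g m σ c) / σ)
        + σ * stdGaussianPDF ((m - g m σ c) / σ) = c)
    (m σ c : ℝ) (hσ : 0 < σ) (hc : 0 < c) :
    hFun ((m - g m σ c) / σ) = c / σ := by
  have h := hg m σ c hσ hc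
  unfold hFun
  field_simp
  linear_combination h

lemma keyE {E : Type*} [NormedAddCommGroup E] [NormedSpace ℝ E]
    (g : ℝ → ℝ → ℝ → ℝ)
    (hg : ∀ m σ c : ℝ, 0 < σ → 0 < c →
      (m - g m σ c) * stdGaussianCDF ((m - g m σ c) / σ)
        + σ * stdGaussianPDF ((m - g m σ c) / σ) = c)
    (x : E) (m s c : E → ℝ) (m' s' c' : E →L[ℝ] ℝ)
    (hm : HasFDerivAt m m' x) (hs : HasFDerivAt s s' x) (hc : HasFDerivAt c c' x)
    (hsx : 0 < s x) (hcx : 0 < c x) :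
    HasFDerivAt (fun y => g (m y) (s y) (c y))
      (m' + (stdGaussianCDF ((m x - g (m x) (s x) (c x)) / s x))⁻¹ •
        (stdGaussianPDF ((m x - g (m x) (s x) (c x)) / s x) • s' - c')) x := by
  set z0 := (m x - g (m x) (s x) (c x)) / s x with hz0
  have hΦpos := cdf_pos z0
  have hΦne : stdGaussianCDF z0 ≠ 0 := hΦpos.ne'
  have hstrict := hFun_strict z0
  set H := hstrict.localInverse hFun (stdGaussianCDF z0) z0 hΦne with hH
  have hkey : hFun z0 = c x / s x := hFun_key g hg _ _ _ hsx hcx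
  have hkey' : hFun z0 = c x * (s x)⁻¹ := by rw [hkey]; ring
  have hHderiv : HasDerivAt H (stdGaussianCDF z0)⁻¹ (c x * (s x)⁻¹) := by
    have := hstrict.to_localInverse (hf' := hΦne)
    rw [hkey'] at this
    exact this.hasDerivAt
  have hinv : HasFDerivAt (fun y => (s y)⁻¹) (-((s x)^2)⁻¹ • s') x :=
    (hasDerivAt_inv hsx.ne').comp_hasFDerivAt x hs
  have hq : HasFDerivAt (fun y => c y * (s y)⁻¹)
      (c x • (-((s x)^2)⁻¹ • s') + (s x)⁻¹ • c') x := hc.mul hinv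
  have hqcont : ContinuousAt (fun y => c y * (s y)⁻¹) x := hq.continuousAt
  have hright : ∀ᶠ u in nhds (c x * (s x)⁻¹), hFun (H u) = u := by
    have := (hstrict.hasStrictFDerivAt_equiv hΦne).eventually_right_inverse
    rw [hkey'] at this
    exact this
  have hright' : ∀ᶠ y in nhds x, hFun (H (c y * (s y)⁻¹)) = c y * (s y)⁻¹ :=
    hqcont.eventually hright
  have hev : ∀ᶠ y in nhds x, g (m y) (s y) (c y) = m y - s y * H (c y * (s y)⁻¹) := by
    have h1 : ∀ᶠ y in nhds x, 0 < s y := hs.continuousAt.eventually (eventually_gt_nhds hsx)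
    have h2 : ∀ᶠ y in nhds x, 0 < c y := hc.continuousAt.eventually (eventually_gt_nhds hcx)
    filter_upwards [h1, h2, hright'] with y hy1 hy2 hy3
    have hk := hFun_key g hg (m y) (s y) (c y) hy1 hy2
    have : (m y - g (m y) (s y) (c y)) / s y = H (c y * (s y)⁻¹) := by
      apply hFun_injective
      rw [hk, hy3]
      ring
    rw [div_eq_iff hy1.ne'] at this
    linarith [this, mul_comm (H (c y * (s y)⁻¹)) (s y)]
  have hF : HasFDerivAt (fun y => m y - s y * H (c y * (s y)⁻¹))
      (m' + (stdGaussianCDF z0)⁻¹ • (stdGaussianPDF z0 • s' - c')) x := by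
    have hHy : HasFDerivAt (fun y => H (c y * (s y)⁻¹))
        ((stdGaussianCDF z0)⁻¹ • (c x • (-((s x)^2)⁻¹ • s') + (s x)⁻¹ • c')) x :=
      hHderiv.comp_hasFDerivAt x hq
    have hmul := hs.mul hHy
    have hHval : H (c x * (s x)⁻¹) = z0 := by
      rw [← hkey']
      exact (hstrict.hasStrictFDerivAt_equiv hΦne).localInverse_apply_image
    have hsub := hm.sub hmul
    refine hsub.congr_fderiv ?_
    ext v
    simp only [hHval, ContinuousLinearMap.smul_apply, ContinuousLinearMap.sub_apply,
      ContinuousLinearMap.add_apply, ContinuousLinearMap.coe_smul', Pi.smul_apply,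
      ContinuousLinearMap.coe_sub', ContinuousLinearMap.add_apply, smul_eq_mul,
      ContinuousLinearMap.neg_apply, Pi.neg_apply]
    have hfz : z0 * stdGaussianCDF z0 + stdGaussianPDF z0 = c x * (s x)⁻¹ := hkey'
    have hfz' : (z0 * stdGaussianCDF z0 + stdGaussianPDF z0) * s x = c x := by
      rw [hfz]; field_simp
    have hsx0 : s x ≠ 0 := hsx.ne'
    linear_combination (norm := skip) (-(s' v * (stdGaussianCDF z0)⁻¹ * (s x)⁻¹)) * hfz'
    field_simp
    ring
  exact hF.congr_of_eventuallyEq hev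

theorem stmt7 (g : ℝ → ℝ → ℝ → ℝ)
    (hg : ∀ m σ c : ℝ, 0 < σ → 0 < c →
      (m - g m σ c) * stdGaussianCDF ((m - g m σ c) / σ)
        + σ * stdGaussianPDF ((m - g m σ c) / σ) = c) :
    (∀ m σ c : ℝ, 0 < σ → 0 < c →
      DifferentiableAt ℝ (fun p : ℝ × ℝ × ℝ => g p.1 p.2.1 p.2.2) (m, σ, c)) ∧
    (∀ m σ c : ℝ, 0 < σ → 0 < c →
      HasDerivAt (fun m' => g m' σ c) 1 m ∧
      HasDerivAt (fun σ' => g m σ' c)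
        (stdGaussianPDF ((m - g m σ c) / σ) / stdGaussianCDF ((m - g m σ c) / σ)) σ ∧
      HasDerivAt (fun c' => g m σ c')
        (-1 / stdGaussianCDF ((m - g m σ c) / σ)) c) ∧
    (∀ (E : Type*) [inst1 : NormedAddCommGroup E] [inst2 : NormedSpace ℝ E] (x : E)
      (m s c : E → ℝ) (m' s' c' : E →L[ℝ] ℝ),
      HasFDerivAt m m' x → HasFDerivAt s s' x → HasFDerivAt c c' x →
      0 < s x → 0 < c x →
      HasFDerivAt (fun y => g (m y) (s y) (c y))
        (m' + (stdGaussianCDF ((m x - g (m x) (s x) (c x)) / s x))⁻¹ •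
          (stdGaussianPDF ((m x - g (m x) (s x) (c x)) / s x) • s' - c')) x) := by
  refine ⟨?_, ?_, ?_⟩
  · intro m σ c hσ hc
    have := keyE g hg ((m, σ, c) : ℝ × ℝ × ℝ)
      (fun p => p.1) (fun p => p.2.1) (fun p => p.2.2)
      (ContinuousLinearMap.fst ℝ ℝ (ℝ × ℝ))
      ((ContinuousLinearMap.fst ℝ ℝ ℝ).comp (ContinuousLinearMap.snd ℝ ℝ (ℝ × ℝ)))
      ((ContinuousLinearMap.snd ℝ ℝ ℝ).comp (ContinuousLinearMap.snd ℝ ℝ (ℝ × ℝ)))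
      (hasFDerivAt_fst) (hasFDerivAt_fst.comp _ hasFDerivAt_snd)
      (hasFDerivAt_snd.comp _ hasFDerivAt_snd) hσ hc
    exact this.differentiableAt
  · intro m σ c hσ hc
    have hΦne : stdGaussianCDF ((m - g m σ c) / σ) ≠ 0 := (cdf_pos _).ne'
    refine ⟨?_, ?_, ?_⟩
    · have := (keyE g hg m (fun y => y) (fun _ => σ) (fun _ => c)
        (ContinuousLinearMap.id ℝ ℝ) 0 0
        (hasFDerivAt_id m) (hasFDerivAt_const σ m) (hasFDerivAt_const c m) hσ hc).hasDerivAt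
      simpa using this
    · have := (keyE g hg σ (fun _ => m) (fun y => y) (fun _ => c)
        0 (ContinuousLinearMap.id ℝ ℝ) 0
        (hasFDerivAt_const m σ) (hasFDerivAt_id σ) (hasFDerivAt_const c σ) hσ hc).hasDerivAt
      simp only [ContinuousLinearMap.add_apply, ContinuousLinearMap.zero_apply,
        ContinuousLinearMap.smul_apply, ContinuousLinearMap.sub_apply,
        ContinuousLinearMap.id_apply, smul_eq_mul] at this
      convert this using 1
      field_simp
      ring
    · have := (keyE g hg c (fun _ => m) (fun _ => σ) (fun y => y)
        0 0 (ContinuousLinearMap.id ℝ ℝ)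
        (hasFDerivAt_const m c) (hasFDerivAt_const σ c) (hasFDerivAt_id c) hσ hc).hasDerivAt
      simp only [ContinuousLinearMap.add_apply, ContinuousLinearMap.zero_apply,
        ContinuousLinearMap.smul_apply, ContinuousLinearMap.sub_apply,
        ContinuousLinearMap.id_apply, smul_eq_mul] at this
      convert this using 1
      field_simp
      ring
  · intro E _ _ x m s c m' s' c' hm hs hc hsx hcx
    exact keyE g hg x m s c m' s' c' hm hs hc hsx hcx
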